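/- Let g ∈ L¹[0,∞) and suppose ∫₀^∞ e^{−iπ e^{s−t} cos(t−s)} g(t) dt = 0 for all s ∈ ℝ. Then g = 0 a.e. (Heisenberg uniqueness: the spiral Γ = {(e^{−t}cos t, e^{−t}sin t) : t ≥ 0} paired with the anti-spiral Λ = {(e^s cos s, e^s sin s) : s ≤ 0} is a Heisenberg uniqueness pair.) -/

import Mathlib

open MeasureTheory Real Filter Topology
open scoped ENNReal NNReal

namespace SpiralHUP


noncomputable def dd (p : ℕ × ℕ) : ℂ :=
  (-(Complex.I * (Real.pi : ℂ) / 2)) ^ (p.1 + p.2) / ((p.1.factorial : ℂ) * (p.2.factorial : ℂ))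

noncomputable def mu (p : ℕ × ℕ) : ℂ := (1 + Complex.I) * p.1 + (1 - Complex.I) * p.2

lemma mu_re (p : ℕ × ℕ) : (mu p).re = (p.1 : ℝ) + p.2 := by
  simp [mu]

lemma mu_im (p : ℕ × ℕ) : (mu p).im = (p.1 : ℝ) - p.2 := by
  simp [mu]; ring

lemma dd_ne_zero (p : ℕ × ℕ) : dd p ≠ 0 := by
  apply div_ne_zero
  · apply pow_ne_zero
    simp [Complex.ext_iff, Real.pi_ne_zero]
  · have h1 : (p.1.factorial : ℂ) ≠ 0 := Nat.cast_ne_zero.mpr p.1.factorial_ne_zero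
    have h2 : (p.2.factorial : ℂ) ≠ 0 := Nat.cast_ne_zero.mpr p.2.factorial_ne_zero
    exact mul_ne_zero h1 h2

lemma norm_exp_mu (p : ℕ × ℕ) (u : ℝ) :
    ‖Complex.exp (mu p * u)‖ = Real.exp (((p.1 : ℝ) + p.2) * u) := by
  rw [Complex.norm_exp]
  congr 1
  have : (mu p * u).re = (mu p).re * u := by simp [Complex.mul_re]
  rw [this, mu_re]

lemma norm_dd (p : ℕ × ℕ) :
    ‖dd p‖ = (Real.pi / 2) ^ (p.1 + p.2) / ((p.1.factorial : ℝ) * (p.2.factorial : ℝ)) := by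
  rw [dd, norm_div, norm_pow, norm_neg]
  congr 2
  · simp [norm_div, norm_mul, Complex.norm_I, Complex.norm_real, Real.norm_eq_abs,
      abs_of_nonneg Real.pi_nonneg]
  · simp [norm_mul, Complex.norm_natCast]


lemma summable_S (σ : ℝ) :
    Summable (fun p : ℕ × ℕ => ‖dd p‖ * Real.exp (((p.1 : ℝ) + p.2) * σ)) := by
  have h1 : Summable (fun m : ℕ => (Real.pi / 2 * Real.exp σ) ^ m / m.factorial) :=
    Real.summable_pow_div_factorial _
  have h2 := Summable.mul_of_nonneg h1 h1 (fun m => by positivity) (fun n => by positivity)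
  apply h2.congr
  intro p
  rw [norm_dd]
  have hfac1 : (0:ℝ) < p.1.factorial := by positivity
  have hfac2 : (0:ℝ) < p.2.factorial := by positivity
  rw [mul_pow, mul_pow]
  have he : Real.exp (((p.1 : ℝ) + p.2) * σ) = Real.exp σ ^ p.1 * Real.exp σ ^ p.2 := by
    rw [← Real.exp_nat_mul, ← Real.exp_nat_mul, ← Real.exp_add]
    ring_nf
  rw [he, pow_add]
  field_simp

lemma summable_norm_bd (σ C : ℝ) (hC : 0 ≤ C) :
    Summable (fun p : ℕ × ℕ => C * (‖dd p‖ * Real.exp (((p.1 : ℝ) + p.2) * σ))) :=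
  (summable_S σ).mul_left C

lemma kernel_expand (u : ℝ) :
    Complex.exp (-(Complex.I * (Real.pi : ℂ) * (Real.exp u : ℂ) * (Real.cos u : ℂ))) =
      ∑' p : ℕ × ℕ, dd p * Complex.exp (mu p * u) := by
  have key : -(Complex.I * (Real.pi : ℂ) * (Real.exp u : ℂ) * (Real.cos u : ℂ)) =
      (-(Complex.I * (Real.pi : ℂ) / 2)) * Complex.exp ((1 + Complex.I) * u)
        + (-(Complex.I * (Real.pi : ℂ) / 2)) * Complex.exp ((1 - Complex.I) * u) := by
    have h1 : Complex.exp ((1 + Complex.I) * u)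
        = Complex.exp (u : ℂ) * Complex.exp ((u : ℂ) * Complex.I) := by
      rw [← Complex.exp_add]; ring_nf
    have h2 : Complex.exp ((1 - Complex.I) * u)
        = Complex.exp (u : ℂ) * Complex.exp (-(u : ℂ) * Complex.I) := by
      rw [← Complex.exp_add]; ring_nf
    have h3 := Complex.two_cos (x := (u : ℂ))
    have h4 : (Real.exp u : ℂ) = Complex.exp (u : ℂ) := Complex.ofReal_exp u
    have h5 : (Real.cos u : ℂ) = Complex.cos (u : ℂ) := Complex.ofReal_cos u
    rw [h1, h2, h4, h5]
    rw [← mul_add, ← mul_add, h3.symm]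
    ring
  have e1 : ∀ z : ℂ, Complex.exp z = ∑' n : ℕ, z ^ n / n.factorial := fun z => by
    rw [Complex.exp_eq_exp_ℂ, NormedSpace.exp_eq_tsum_div]
  have hsn : ∀ z : ℂ, Summable (fun n : ℕ => ‖z ^ n / (n.factorial : ℂ)‖) := by
    intro z
    apply (Real.summable_pow_div_factorial ‖z‖).congr
    intro n
    rw [norm_div, norm_pow]
    simp [Complex.norm_natCast]
  rw [key, Complex.exp_add,
    e1 ((-(Complex.I * (Real.pi:ℂ)/2)) * Complex.exp ((1+Complex.I)*(u:ℂ))),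
    e1 ((-(Complex.I * (Real.pi:ℂ)/2)) * Complex.exp ((1-Complex.I)*(u:ℂ))),
    tsum_mul_tsum_of_summable_norm (hsn _) (hsn _)]
  apply tsum_congr
  intro p
  have hm : ((-(Complex.I * (Real.pi:ℂ)/2)) * Complex.exp ((1+Complex.I)*(u:ℂ))) ^ p.1
      = (-(Complex.I * (Real.pi:ℂ)/2))^p.1 * Complex.exp ((p.1 : ℂ) * ((1+Complex.I)*(u:ℂ))) := by
    rw [mul_pow, Complex.exp_nat_mul]
  have hn : ((-(Complex.I * (Real.pi:ℂ)/2)) * Complex.exp ((1-Complex.I)*(u:ℂ))) ^ p.2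
      = (-(Complex.I * (Real.pi:ℂ)/2))^p.2 * Complex.exp ((p.2 : ℂ) * ((1-Complex.I)*(u:ℂ))) := by
    rw [mul_pow, Complex.exp_nat_mul]
  rw [hm, hn, dd, div_mul_div_comm, mul_mul_mul_comm, ← pow_add, ← Complex.exp_add]
  have harg : (p.1:ℂ) * ((1+Complex.I)*(u:ℂ)) + (p.2:ℂ)*((1-Complex.I)*(u:ℂ)) = mu p * u := by
    rw [mu]; ring
  rw [harg]
  ring



noncomputable def cc (g : ℝ → ℂ) (p : ℕ × ℕ) : ℂ :=
  ∫ t in Set.Ioi (0:ℝ), Complex.exp (-(mu p) * t) * g t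

noncomputable def bb (g : ℝ → ℂ) (p : ℕ × ℕ) : ℂ := dd p * cc g p

lemma E1 {g : ℝ → ℂ} (hg : Integrable g)
    (hvanish : ∀ s : ℝ,
      ∫ t in Set.Ioi (0 : ℝ),
        Complex.exp (-(Complex.I * (Real.pi : ℂ) * (Real.exp (s - t) : ℂ) * (Real.cos (t - s) : ℂ)))
          * g t = 0) (s : ℝ) :
    ∑' p : ℕ × ℕ, bb g p * Complex.exp (mu p * s) = 0 := by
  classical
  set F : ℕ × ℕ → ℝ → ℂ := fun p t => dd p * Complex.exp (mu p * ((s : ℂ) - t)) * g t with hF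
  have hFmeas : ∀ p, AEStronglyMeasurable (F p) (volume.restrict (Set.Ioi (0:ℝ))) := by
    intro p
    have hc : Continuous fun t : ℝ => dd p * Complex.exp (mu p * ((s : ℂ) - t)) := by
      fun_prop
    exact (hc.aestronglyMeasurable).mul (hg.1.restrict)
  -- the lintegral bound
  have hI : ∫⁻ t in Set.Ioi (0:ℝ), ‖g t‖₊ ∂volume ≠ ⊤ := by
    exact ne_of_lt (lt_of_le_of_lt (setLIntegral_le_lintegral _ _) hg.2)
  have hbd : ∀ p : ℕ × ℕ, ∫⁻ t in Set.Ioi (0:ℝ), ‖F p t‖₊ ∂volume ≤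
      ENNReal.ofReal (‖dd p‖ * Real.exp (((p.1:ℝ) + p.2) * s)) * ∫⁻ t in Set.Ioi (0:ℝ), ‖g t‖₊ ∂volume := by
    intro p
    rw [← lintegral_const_mul' _ _ ENNReal.ofReal_ne_top]
    apply lintegral_mono_ae
    rw [ae_restrict_iff' measurableSet_Ioi]
    filter_upwards with t ht
    have hnorm : ‖F p t‖ = ‖dd p‖ * Real.exp (((p.1:ℝ)+p.2) * (s - t)) * ‖g t‖ := by
      rw [hF]
      simp only [norm_mul]
      congr 2
      have : mu p * ((s:ℂ) - t) = mu p * ((s - t : ℝ) : ℂ) := by push_cast; ring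
      rw [this, norm_exp_mu]
    have hle : ‖F p t‖ ≤ (‖dd p‖ * Real.exp (((p.1:ℝ)+p.2) * s)) * ‖g t‖ := by
      rw [hnorm]
      have hexp : Real.exp (((p.1:ℝ)+p.2) * (s - t)) ≤ Real.exp (((p.1:ℝ)+p.2) * s) := by
        apply Real.exp_le_exp.2
        have hp : (0:ℝ) ≤ (p.1:ℝ)+p.2 := by positivity
        have ht' := Set.mem_Ioi.1 ht
        nlinarith
      gcongr
    calc (‖F p t‖₊ : ℝ≥0∞) = ENNReal.ofReal ‖F p t‖ := by
          rw [ofReal_norm_eq_enorm, enorm_eq_nnnorm]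
      _ ≤ ENNReal.ofReal ((‖dd p‖ * Real.exp (((p.1:ℝ)+p.2) * s)) * ‖g t‖) :=
          ENNReal.ofReal_le_ofReal hle
      _ = ENNReal.ofReal (‖dd p‖ * Real.exp (((p.1:ℝ)+p.2) * s)) * (‖g t‖₊ : ℝ≥0∞) := by
          rw [ENNReal.ofReal_mul (by positivity), ofReal_norm_eq_enorm, enorm_eq_nnnorm]
  have hsum_ne_top : ∑' p : ℕ × ℕ, ∫⁻ t in Set.Ioi (0:ℝ), ‖F p t‖₊ ∂volume ≠ ⊤ := by
    apply ne_of_lt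
    calc ∑' p : ℕ × ℕ, ∫⁻ t in Set.Ioi (0:ℝ), ‖F p t‖₊ ∂volume
        ≤ ∑' p : ℕ × ℕ, ENNReal.ofReal (‖dd p‖ * Real.exp (((p.1:ℝ) + p.2) * s)) *
            ∫⁻ t in Set.Ioi (0:ℝ), ‖g t‖₊ ∂volume := ENNReal.tsum_le_tsum hbd
      _ = (∑' p : ℕ × ℕ, ENNReal.ofReal (‖dd p‖ * Real.exp (((p.1:ℝ) + p.2) * s))) *
            ∫⁻ t in Set.Ioi (0:ℝ), ‖g t‖₊ ∂volume := ENNReal.tsum_mul_right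
      _ = ENNReal.ofReal (∑' p : ℕ × ℕ, ‖dd p‖ * Real.exp (((p.1:ℝ) + p.2) * s)) *
            ∫⁻ t in Set.Ioi (0:ℝ), ‖g t‖₊ ∂volume := by
          rw [ENNReal.ofReal_tsum_of_nonneg (fun p => by positivity) (summable_S s)]
      _ < ⊤ := ENNReal.mul_lt_top ENNReal.ofReal_lt_top (lt_top_iff_ne_top.2 hI)
  have hswap := integral_tsum hFmeas hsum_ne_top
  -- identify the LHS with the vanishing integral
  have hptwise : ∀ t : ℝ, (∑' p : ℕ × ℕ, F p t) =
      Complex.exp (-(Complex.I * (Real.pi : ℂ) * (Real.exp (s - t) : ℂ) * (Real.cos (t - s) : ℂ)))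
        * g t := by
    intro t
    have h1 : Real.cos (t - s) = Real.cos (s - t) := by
      rw [show t - s = -(s - t) by ring, Real.cos_neg]
    rw [h1, kernel_expand (s - t), ← tsum_mul_right]
    apply tsum_congr
    intro p
    rw [hF]
    push_cast
    ring
  have hzero : ∫ t in Set.Ioi (0:ℝ), (∑' p : ℕ × ℕ, F p t) ∂volume = 0 := by
    rw [show (fun t => ∑' p : ℕ × ℕ, F p t) = fun t =>
      Complex.exp (-(Complex.I * (Real.pi : ℂ) * (Real.exp (s - t) : ℂ) * (Real.cos (t - s) : ℂ)))
        * g t from funext hptwise]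
    exact hvanish s
  rw [hzero] at hswap
  -- compute each integral
  have hterm : ∀ p : ℕ × ℕ, ∫ t in Set.Ioi (0:ℝ), F p t ∂volume = bb g p * Complex.exp (mu p * s) := by
    intro p
    have : ∀ t : ℝ, F p t = (dd p * Complex.exp (mu p * s)) * (Complex.exp (-(mu p) * (t:ℂ)) * g t) := by
      intro t
      rw [hF]
      simp only
      rw [show mu p * ((s:ℂ) - t) = mu p * s + (-(mu p) * t) by ring, Complex.exp_add]
      ring
    rw [show F p = fun t : ℝ => (dd p * Complex.exp (mu p * s)) * (Complex.exp (-(mu p) * (t:ℂ)) * g t) from funext this]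
    rw [integral_const_mul]
    rw [bb, cc]
    ring
  calc ∑' p : ℕ × ℕ, bb g p * Complex.exp (mu p * s)
      = ∑' p : ℕ × ℕ, ∫ t in Set.Ioi (0:ℝ), F p t ∂volume :=
        tsum_congr fun p => (hterm p).symm
    _ = 0 := hswap.symm


lemma norm_exp_w (q p : ℕ × ℕ) (s : ℝ) :
    ‖Complex.exp ((mu q - mu p) * s)‖
      = Real.exp ((((q.1:ℝ) + q.2) - ((p.1:ℝ) + p.2)) * s) := by
  rw [Complex.norm_exp]
  congr 1
  have : ((mu q - mu p) * (s:ℂ)).re = (mu q - mu p).re * s := by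
    simp [Complex.mul_re]
  rw [this, Complex.sub_re, mu_re, mu_re]

lemma integrable_exp_mul {g : ℝ → ℂ} (hg : Integrable g) (p : ℕ × ℕ) :
    Integrable (fun t : ℝ => Complex.exp (-(mu p) * (t:ℂ)) * g t) (volume.restrict (Set.Ioi (0:ℝ))) := by
  apply Integrable.mono' (hg.norm.restrict)
  · have hc : Continuous fun t : ℝ => Complex.exp (-(mu p) * (t:ℂ)) := by fun_prop
    exact hc.aestronglyMeasurable.mul hg.1.restrict
  · rw [ae_restrict_iff' measurableSet_Ioi]
    filter_upwards with t ht
    rw [norm_mul]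
    have h1 : ‖Complex.exp (-(mu p) * (t:ℂ))‖ = Real.exp (((p.1:ℝ) + p.2) * (-t)) := by
      rw [show -(mu p) * (t:ℂ) = mu p * ((-t : ℝ) : ℂ) by push_cast; ring, norm_exp_mu]
    rw [h1]
    have h2 : Real.exp (((p.1:ℝ) + p.2) * (-t)) ≤ 1 := by
      rw [Real.exp_le_one_iff]
      have ht' := Set.mem_Ioi.1 ht
      have : (0:ℝ) ≤ (p.1:ℝ) + p.2 := by positivity
      nlinarith
    calc Real.exp (((p.1:ℝ) + p.2) * (-t)) * ‖g t‖ ≤ 1 * ‖g t‖ := by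
          apply mul_le_mul_of_nonneg_right h2 (norm_nonneg _)
      _ = ‖g t‖ := one_mul _

lemma norm_cc_le {g : ℝ → ℂ} (hg : Integrable g) (p : ℕ × ℕ) :
    ‖cc g p‖ ≤ ∫ t in Set.Ioi (0:ℝ), ‖g t‖ := by
  rw [cc]
  apply norm_integral_le_of_norm_le (hg.norm.restrict)
  rw [ae_restrict_iff' measurableSet_Ioi]
  filter_upwards with t ht
  rw [norm_mul]
  have h1 : ‖Complex.exp (-(mu p) * (t:ℂ))‖ = Real.exp (((p.1:ℝ) + p.2) * (-t)) := by
    rw [show -(mu p) * (t:ℂ) = mu p * ((-t : ℝ) : ℂ) by push_cast; ring, norm_exp_mu]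
  rw [h1]
  have h2 : Real.exp (((p.1:ℝ) + p.2) * (-t)) ≤ 1 := by
    rw [Real.exp_le_one_iff]
    have ht' := Set.mem_Ioi.1 ht
    have : (0:ℝ) ≤ (p.1:ℝ) + p.2 := by positivity
    nlinarith
  calc Real.exp (((p.1:ℝ) + p.2) * (-t)) * ‖g t‖ ≤ 1 * ‖g t‖ :=
        mul_le_mul_of_nonneg_right h2 (norm_nonneg _)
    _ = ‖g t‖ := one_mul _

lemma summable_bb {g : ℝ → ℂ} (hg : Integrable g) (σ : ℝ) :
    Summable (fun q : ℕ × ℕ => ‖bb g q‖ * Real.exp (((q.1:ℝ) + q.2) * σ)) := by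
  set B₀ := ∫ t in Set.Ioi (0:ℝ), ‖g t‖ with hB₀
  have hB₀0 : 0 ≤ B₀ := setIntegral_nonneg measurableSet_Ioi (fun t _ => norm_nonneg _)
  refine Summable.of_nonneg_of_le (fun q => by positivity) (fun q => ?_)
    ((summable_S σ).mul_left B₀)
  · rw [bb, norm_mul]
    have := norm_cc_le hg q
    have hd : 0 ≤ ‖dd q‖ := norm_nonneg _
    have he : 0 ≤ Real.exp (((q.1:ℝ) + q.2) * σ) := le_of_lt (Real.exp_pos _)
    nlinarith [mul_le_mul_of_nonneg_right (mul_le_mul_of_nonneg_left this hd) he]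


lemma bb_zero {g : ℝ → ℂ} (hg : Integrable g)
    (hE1 : ∀ s : ℝ, ∑' q : ℕ × ℕ, bb g q * Complex.exp (mu q * s) = 0) :
    ∀ p : ℕ × ℕ, bb g p = 0 := by
  have hSb0 : Summable (fun q : ℕ × ℕ => ‖bb g q‖) :=
    (summable_bb hg 0).congr (fun q => by simp)
  set Cb := ∑' q : ℕ × ℕ, ‖bb g q‖ with hCb
  have hmain : ∀ N : ℕ, ∀ p : ℕ × ℕ, p.1 + p.2 = N → bb g p = 0 := by
    intro N
    induction N using Nat.strong_induction_on with
    | _ N IH =>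
    intro p hpN
    have hkey : ∀ x : ℝ, x + 2*Real.pi ≤ 0 →
        ‖bb g p‖ * (2*Real.pi) ≤ Cb * (2*Real.pi * Real.exp (x + 2*Real.pi)) := by
      intro x hx
      set w : ℕ × ℕ → ℂ := fun q => mu q - mu p with hw
      set A := Set.Ioc x (x + 2*Real.pi) with hA
      set T : ℕ × ℕ → ℂ := fun q => bb g q * ∫ s in A, Complex.exp (w q * s) with hT
      have hles : x ≤ x + 2*Real.pi := by have := Real.pi_pos; linarith
      have hvol : volume A = ENNReal.ofReal (2*Real.pi) := by
        rw [hA, Real.volume_Ioc]; congr 1; ring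
      have hnormw : ∀ q : ℕ × ℕ, ∀ s : ℝ,
          ‖Complex.exp (w q * s)‖
            = Real.exp ((((q.1:ℝ)+q.2) - ((p.1:ℝ)+p.2)) * s) := fun q s => norm_exp_w q p s
      have hCq : ∀ q : ℕ × ℕ, ∀ s ∈ A, ‖Complex.exp (w q * s)‖ ≤
          Real.exp (((q.1:ℝ)+q.2) * (x+2*Real.pi)) * Real.exp (-(((p.1:ℝ)+p.2) * x)) := by
        intro q s hs
        rw [hnormw, ← Real.exp_add]
        apply Real.exp_le_exp.2
        obtain ⟨hs1, hs2⟩ := hs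
        have h1 : ((q.1:ℝ)+q.2) * s ≤ ((q.1:ℝ)+q.2) * (x+2*Real.pi) :=
          mul_le_mul_of_nonneg_left hs2 (by positivity)
        have h2 : ((p.1:ℝ)+p.2) * x ≤ ((p.1:ℝ)+p.2) * s :=
          mul_le_mul_of_nonneg_left (le_of_lt hs1) (by positivity)
        nlinarith
      -- pointwise vanishing of the modulated series
      have hpt : ∀ s : ℝ, ∑' q : ℕ × ℕ, bb g q * Complex.exp (w q * s) = 0 := by
        intro s
        have h0 := hE1 s
        have hterm : ∀ q : ℕ × ℕ, bb g q * Complex.exp (w q * s)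
            = (bb g q * Complex.exp (mu q * s)) * Complex.exp (-(mu p) * s) := by
          intro q
          rw [hw]
          simp only
          rw [show (mu q - mu p) * (s:ℂ) = mu q * s + (-(mu p) * s) by ring, Complex.exp_add]
          ring
        rw [tsum_congr hterm, tsum_mul_right, h0, zero_mul]
      -- swap sum and integral over A
      have hmeas : ∀ q : ℕ × ℕ, AEStronglyMeasurable
          (fun s : ℝ => bb g q * Complex.exp (w q * s)) (volume.restrict A) := by
        intro q
        apply Continuous.aestronglyMeasurable
        fun_prop
      have hSum1 : Summable (fun q : ℕ × ℕ => ‖bb g q‖ *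
          (Real.exp (((q.1:ℝ)+q.2) * (x+2*Real.pi)) * Real.exp (-(((p.1:ℝ)+p.2) * x)))) := by
        have := (summable_bb hg (x+2*Real.pi)).mul_right (Real.exp (-(((p.1:ℝ)+p.2) * x)))
        apply this.congr
        intro q
        ring
      have hlint : ∑' q : ℕ × ℕ, ∫⁻ s in A, ‖bb g q * Complex.exp (w q * s)‖₊ ∂volume ≠ ⊤ := by
        apply ne_of_lt
        have hper : ∀ q : ℕ × ℕ, ∫⁻ s in A, ‖bb g q * Complex.exp (w q * s)‖₊ ∂volume ≤
            ENNReal.ofReal (‖bb g q‖ * (Real.exp (((q.1:ℝ)+q.2) * (x+2*Real.pi))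
              * Real.exp (-(((p.1:ℝ)+p.2) * x)))) * volume A := by
          intro q
          rw [← setLIntegral_const A _]
          apply lintegral_mono_ae
          rw [ae_restrict_iff' measurableSet_Ioc]
          filter_upwards with s hs
          rw [← enorm_eq_nnnorm, ← ofReal_norm_eq_enorm]
          apply ENNReal.ofReal_le_ofReal
          rw [norm_mul]
          exact mul_le_mul_of_nonneg_left (hCq q s hs) (norm_nonneg _)
        calc ∑' q : ℕ × ℕ, ∫⁻ s in A, ‖bb g q * Complex.exp (w q * s)‖₊ ∂volume
            ≤ ∑' q : ℕ × ℕ, ENNReal.ofReal (‖bb g q‖ * (Real.exp (((q.1:ℝ)+q.2) * (x+2*Real.pi))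
              * Real.exp (-(((p.1:ℝ)+p.2) * x)))) * volume A := ENNReal.tsum_le_tsum hper
          _ = (∑' q : ℕ × ℕ, ENNReal.ofReal (‖bb g q‖ * (Real.exp (((q.1:ℝ)+q.2) * (x+2*Real.pi))
              * Real.exp (-(((p.1:ℝ)+p.2) * x))))) * volume A := ENNReal.tsum_mul_right
          _ < ⊤ := by
              rw [← ENNReal.ofReal_tsum_of_nonneg (fun q => by positivity) hSum1]
              exact ENNReal.mul_lt_top ENNReal.ofReal_lt_top (by rw [hvol]; exact ENNReal.ofReal_lt_top)
      have hzero : ∑' q : ℕ × ℕ, T q = 0 := by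
        have hswap := integral_tsum hmeas hlint
        have hTint : ∀ q : ℕ × ℕ, (∫ s in A, bb g q * Complex.exp (w q * s)) = T q := by
          intro q
          rw [hT]
          simp only
          rw [integral_const_mul]
        rw [tsum_congr (fun q => (hTint q).symm), ← hswap]
        rw [show (fun s : ℝ => ∑' q : ℕ × ℕ, bb g q * Complex.exp (w q * s)) = fun _ => (0:ℂ)
          from funext hpt]
        simp
      -- value at p
      have hTp : T p = bb g p * ((2*Real.pi : ℝ) : ℂ) := by
        rw [hT]
        simp only
        have hw0 : w p = 0 := by rw [hw]; simp
        rw [hw0]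
        simp only [zero_mul, Complex.exp_zero]
        rw [setIntegral_const, measureReal_def, hvol, ENNReal.toReal_ofReal (by positivity)]
        rw [Complex.real_smul, mul_one]
      -- equal-degree, different index: the integral vanishes
      have hTeqN : ∀ q : ℕ × ℕ, q ≠ p → q.1 + q.2 = N → T q = 0 := by
        intro q hqp hqN
        have hsums : (q.1:ℝ) + q.2 = (p.1:ℝ) + p.2 := by
          have : q.1 + q.2 = p.1 + p.2 := hqN.trans hpN.symm
          exact_mod_cast this
        set k : ℤ := (q.1:ℤ) - q.2 - ((p.1:ℤ) - p.2) with hk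
        have hwq : w q = (k:ℂ) * Complex.I := by
          rw [hw]
          apply Complex.ext
          · rw [Complex.sub_re, mu_re, mu_re]
            simp only [Complex.mul_re, Complex.I_re, Complex.I_im, Complex.intCast_re,
              Complex.intCast_im]
            push_cast
            linarith
          · rw [Complex.sub_im, mu_im, mu_im]
            simp only [Complex.mul_im, Complex.I_re, Complex.I_im, Complex.intCast_re,
              Complex.intCast_im, mul_one, mul_zero, zero_mul, add_zero, zero_add]
            rw [hk]
            push_cast
            ring
        have hk0 : k ≠ 0 := by
          intro hkz
          apply hqp
          have h2 : (q.1:ℤ) + q.2 = (p.1:ℤ) + p.2 := by exact_mod_cast hqN.trans hpN.symm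
          have h1 : (q.1:ℤ) - q.2 - ((p.1:ℤ) - p.2) = 0 := by rw [← hk]; exact hkz
          have e1 : (q.1:ℤ) = p.1 := by omega
          have e2 : (q.2:ℤ) = p.2 := by omega
          exact Prod.ext (by exact_mod_cast e1) (by exact_mod_cast e2)
        have hwne : w q ≠ 0 := by
          rw [hwq]
          exact mul_ne_zero (Int.cast_ne_zero.2 hk0) Complex.I_ne_zero
        have hint0 : (∫ s in A, Complex.exp (w q * s)) = 0 := by
          rw [hA, ← intervalIntegral.integral_of_le hles, integral_exp_mul_complex hwne]
          have hper : Complex.exp (w q * ((x + 2*Real.pi : ℝ):ℂ)) = Complex.exp (w q * (x:ℂ)) := by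
            have harg : w q * ((x + 2*Real.pi : ℝ):ℂ) = w q * (x:ℂ) + (k:ℂ) * (2*(Real.pi:ℂ)*Complex.I) := by
              rw [hwq]; push_cast; ring
            rw [harg, Complex.exp_add, Complex.exp_int_mul_two_pi_mul_I, mul_one]
          rw [hper, sub_self, zero_div]
        rw [hT]
        simp only
        rw [hint0, mul_zero]
      -- the ite-bound
      have hTgt : ∀ q : ℕ × ℕ, N < q.1 + q.2 →
          ‖T q‖ ≤ ‖bb g q‖ * (2*Real.pi * Real.exp (x + 2*Real.pi)) := by
        intro q hq
        rw [hT]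
        simp only [norm_mul]
        apply mul_le_mul_of_nonneg_left _ (norm_nonneg _)
        have hb : ∀ s ∈ A, ‖Complex.exp (w q * s)‖ ≤ Real.exp (x + 2*Real.pi) := by
          intro s hs
          rw [hnormw]
          apply Real.exp_le_exp.2
          have hNp : (p.1:ℝ) + p.2 = N := by exact_mod_cast hpN
          have hD1 : (1:ℝ) ≤ ((q.1:ℝ)+q.2) - ((p.1:ℝ)+p.2) := by
            have : (N:ℝ) + 1 ≤ (q.1:ℝ) + q.2 := by exact_mod_cast Nat.succ_le_of_lt hq
            linarith
          obtain ⟨hs1, hs2⟩ := hs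
          have h1 : (((q.1:ℝ)+q.2) - ((p.1:ℝ)+p.2)) * s
              ≤ (((q.1:ℝ)+q.2) - ((p.1:ℝ)+p.2)) * (x + 2*Real.pi) :=
            mul_le_mul_of_nonneg_left hs2 (by linarith)
          nlinarith
        calc ‖∫ s in A, Complex.exp (w q * s)‖
            ≤ Real.exp (x + 2*Real.pi) * (volume A).toReal :=
              norm_setIntegral_le_of_norm_le_const (by rw [hvol]; exact ENNReal.ofReal_lt_top) hb
          _ = 2*Real.pi * Real.exp (x + 2*Real.pi) := by
              rw [hvol, ENNReal.toReal_ofReal (by positivity)]; ring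
      have hTabs : ∀ q : ℕ × ℕ, ‖T q‖ ≤ (‖bb g q‖ * (Real.exp (((q.1:ℝ)+q.2) * (x+2*Real.pi))
          * Real.exp (-(((p.1:ℝ)+p.2) * x)))) * (2*Real.pi) := by
        intro q
        rw [hT]
        simp only [norm_mul]
        calc ‖bb g q‖ * ‖∫ s in A, Complex.exp (w q * s)‖
            ≤ ‖bb g q‖ * ((Real.exp (((q.1:ℝ)+q.2) * (x+2*Real.pi))
                * Real.exp (-(((p.1:ℝ)+p.2) * x))) * (volume A).toReal) :=
              mul_le_mul_of_nonneg_left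
                (norm_setIntegral_le_of_norm_le_const
                  (by rw [hvol]; exact ENNReal.ofReal_lt_top) (hCq q)) (norm_nonneg _)
          _ = (‖bb g q‖ * (Real.exp (((q.1:ℝ)+q.2) * (x+2*Real.pi))
                * Real.exp (-(((p.1:ℝ)+p.2) * x)))) * (2*Real.pi) := by
              rw [hvol, ENNReal.toReal_ofReal (by positivity)]; ring
      have hsumT : Summable T :=
        Summable.of_norm_bounded (hSum1.mul_right (2*Real.pi)) hTabs
      have hTbd : ∀ q : ℕ × ℕ, ‖(if q = p then 0 else T q)‖
          ≤ ‖bb g q‖ * (2*Real.pi * Real.exp (x + 2*Real.pi)) := by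
        intro q
        by_cases hqp : q = p
        · rw [if_pos hqp, norm_zero]; positivity
        · rw [if_neg hqp]
          rcases lt_trichotomy (q.1 + q.2) N with hlt | heq | hgt
          · have hb0 : bb g q = 0 := IH _ hlt q rfl
            rw [hT]; simp only; rw [hb0, zero_mul, norm_zero]; positivity
          · rw [hTeqN q hqp heq, norm_zero]; positivity
          · exact hTgt q hgt
      have hsplit := hsumT.tsum_eq_add_tsum_ite p
      rw [hzero] at hsplit
      have hTpR : T p = -(∑' q : ℕ × ℕ, if q = p then 0 else T q) :=
        eq_neg_of_add_eq_zero_left hsplit.symm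
      have hsummaj : Summable (fun q : ℕ × ℕ => ‖bb g q‖ * (2*Real.pi * Real.exp (x + 2*Real.pi))) :=
        hSb0.mul_right _
      have hR : ‖∑' q : ℕ × ℕ, (if q = p then 0 else T q)‖
          ≤ Cb * (2*Real.pi * Real.exp (x + 2*Real.pi)) := by
        calc ‖∑' q : ℕ × ℕ, (if q = p then 0 else T q)‖
            ≤ ∑' q : ℕ × ℕ, ‖(if q = p then 0 else T q)‖ :=
              norm_tsum_le_tsum_norm
                (hsummaj.of_nonneg_of_le (fun q => norm_nonneg _) hTbd)
          _ ≤ ∑' q : ℕ × ℕ, ‖bb g q‖ * (2*Real.pi * Real.exp (x + 2*Real.pi)) :=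
              Summable.tsum_le_tsum hTbd (hsummaj.of_nonneg_of_le (fun q => norm_nonneg _) hTbd) hsummaj
          _ = Cb * (2*Real.pi * Real.exp (x + 2*Real.pi)) := by rw [hCb, tsum_mul_right]
      have hnTp : ‖T p‖ = ‖bb g p‖ * (2*Real.pi) := by
        rw [hTp, norm_mul, Complex.norm_real, Real.norm_eq_abs, abs_of_pos (by positivity)]
      rw [hTpR, norm_neg] at hnTp
      rw [← hnTp]
      exact hR
    -- let x → -∞
    have hCb0 : 0 ≤ Cb := tsum_nonneg (fun q => norm_nonneg _)
    have hlim : Tendsto (fun x : ℝ => Cb * (2*Real.pi * Real.exp (x + 2*Real.pi))) atBot (nhds 0) := by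
      have h1 : Tendsto (fun x : ℝ => x + 2*Real.pi) atBot atBot :=
        tendsto_atBot_add_const_right _ _ tendsto_id
      have h2 := Real.tendsto_exp_atBot.comp h1
      have h3 := h2.const_mul (Cb * (2*Real.pi))
      simp only [mul_zero] at h3
      apply h3.congr'
      filter_upwards with x
      simp [Function.comp]
      ring
    have hle : ‖bb g p‖ * (2*Real.pi) ≤ 0 := by
      apply ge_of_tendsto hlim
      filter_upwards [eventually_le_atBot (-(2*Real.pi))] with x hx
      exact hkey x (by linarith)
    have h2π : 0 < 2*Real.pi := by positivity
    have hfin : ‖bb g p‖ ≤ 0 := by nlinarith [norm_nonneg (bb g p)]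
    exact norm_le_zero_iff.1 hfin
  intro p
  exact hmain (p.1 + p.2) p rfl


/-- the spiral parametrization by radius -/
noncomputable def hfun (r : ℝ) : ℂ := (r : ℂ) * Complex.exp (Complex.I * Real.log r)

lemma hfun_cont : Continuous hfun := by
  rw [continuous_iff_continuousAt]
  intro r
  rcases eq_or_ne r 0 with hr | hr
  · subst hr
    unfold ContinuousAt
    have h0 : hfun 0 = 0 := by simp [hfun]
    rw [h0]
    have hb : ∀ x : ℝ, ‖hfun x‖ ≤ |x| := by
      intro x
      rw [hfun, norm_mul]
      have h1 : ‖Complex.exp (Complex.I * Real.log x)‖ = 1 := by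
        rw [Complex.norm_exp]
        simp [Complex.mul_re]
      rw [h1, mul_one, Complex.norm_real, Real.norm_eq_abs]
    have habs : Tendsto (fun r : ℝ => |r|) (nhds 0) (nhds 0) := by
      have : Tendsto (fun r : ℝ => |r|) (nhds 0) (nhds |0|) :=
        (continuous_abs).continuousAt
      simpa using this
    exact squeeze_zero_norm hb habs
  · apply ContinuousAt.mul
    · exact (Complex.continuous_ofReal).continuousAt
    · apply Complex.continuous_exp.continuousAt.comp
      apply ContinuousAt.mul continuousAt_const
      exact (Complex.continuous_ofReal).continuousAt.comp (Real.continuousAt_log hr)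

noncomputable def KK : Set ℂ := hfun '' Set.Icc 0 1

lemma KK_compact : IsCompact KK := (isCompact_Icc).image hfun_cont

lemma hfun_exp (t : ℝ) : hfun (Real.exp (-t)) = Complex.exp (-(1 + Complex.I) * t) := by
  rw [hfun, Real.log_exp]
  rw [Complex.ofReal_exp]
  rw [← Complex.exp_add]
  congr 1
  push_cast
  ring

lemma zpt_mem (t : ℝ) (ht : 0 ≤ t) : Complex.exp (-(1 + Complex.I) * t) ∈ KK := by
  rw [← hfun_exp]
  exact Set.mem_image_of_mem _ ⟨(Real.exp_pos _).le, Real.exp_le_one_iff.2 (by linarith)⟩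

lemma min_mem (t : ℝ) : hfun (min (Real.exp (-t)) 1) ∈ KK :=
  Set.mem_image_of_mem _ ⟨le_min (Real.exp_pos _).le zero_le_one, min_le_right _ _⟩

noncomputable def Zfun (t : ℝ) : KK := ⟨hfun (min (Real.exp (-t)) 1), min_mem t⟩

lemma Zfun_cont : Continuous Zfun := by
  apply Continuous.subtype_mk
  exact hfun_cont.comp ((Real.continuous_exp.comp continuous_neg).min continuous_const)

lemma Zfun_eq (t : ℝ) (ht : 0 < t) : (Zfun t : ℂ) = Complex.exp (-(1 + Complex.I) * t) := by
  have : min (Real.exp (-t)) 1 = Real.exp (-t) :=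
    min_eq_left (Real.exp_le_one_iff.2 (by linarith))
  rw [Zfun]
  simp only
  rw [this, hfun_exp]



instance : CompactSpace KK := isCompact_iff_compactSpace.mp KK_compact

noncomputable def ev (g : ℝ → ℂ) (f : C(KK, ℂ)) : ℂ :=
  ∫ t in Set.Ioi (0:ℝ), f (Zfun t) * g t

variable {g : ℝ → ℂ}

lemma ev_int (hg : Integrable g) (f : C(KK, ℂ)) :
    Integrable (fun t => f (Zfun t) * g t) (volume.restrict (Set.Ioi (0:ℝ))) := by
  apply Integrable.bdd_mul hg.restrict
  · exact (f.continuous.comp Zfun_cont).aestronglyMeasurable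
  · exact ae_of_all _ fun t => f.norm_coe_le_norm _

lemma ev_bound (hg : Integrable g) (f : C(KK, ℂ)) :
    ‖ev g f‖ ≤ ‖f‖ * ∫ t in Set.Ioi (0:ℝ), ‖g t‖ := by
  rw [ev]
  have h1 : ∀ᵐ t ∂(volume.restrict (Set.Ioi (0:ℝ))), ‖f (Zfun t) * g t‖ ≤ ‖f‖ * ‖g t‖ := by
    filter_upwards with t
    rw [norm_mul]
    exact mul_le_mul_of_nonneg_right (f.norm_coe_le_norm _) (norm_nonneg _)
  calc ‖∫ t in Set.Ioi (0:ℝ), f (Zfun t) * g t‖ ≤ ∫ t in Set.Ioi (0:ℝ), ‖f‖ * ‖g t‖ :=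
        norm_integral_le_of_norm_le ((hg.norm.restrict).const_mul _) h1
    _ = ‖f‖ * ∫ t in Set.Ioi (0:ℝ), ‖g t‖ := integral_const_mul _ _

lemma ev_add (hg : Integrable g) (x y : C(KK, ℂ)) : ev g (x + y) = ev g x + ev g y := by
  rw [ev, ev, ev, ← integral_add (ev_int hg x) (ev_int hg y)]
  congr 1
  funext t
  simp [add_mul]

lemma ev_sub (hg : Integrable g) (x y : C(KK, ℂ)) : ev g (x - y) = ev g x - ev g y := by
  rw [ev, ev, ev, ← integral_sub (ev_int hg x) (ev_int hg y)]
  congr 1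
  funext t
  simp [sub_mul]

lemma ev_smul (hg : Integrable g) (a : ℂ) (x : C(KK, ℂ)) : ev g (a • x) = a * ev g x := by
  rw [ev, ev, ← integral_const_mul]
  congr 1
  funext t
  simp [mul_assoc]

noncomputable def iota : C(KK, ℂ) := ContinuousMap.restrict KK (ContinuousMap.id ℂ)

def monoSet : Set C(KK, ℂ) := {h | ∃ m n : ℕ, h = iota ^ m * (star iota) ^ n}

lemma ev_mono (hcc : ∀ p : ℕ × ℕ, cc g p = 0) (m n : ℕ) :
    ev g (iota ^ m * (star iota) ^ n) = 0 := by
  rw [ev]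
  have hval : Set.EqOn (fun t => (iota ^ m * (star iota) ^ n) (Zfun t) * g t)
      (fun t => Complex.exp (-(mu (m, n)) * t) * g t) (Set.Ioi (0:ℝ)) := by
    intro t ht
    have ht' : (0:ℝ) < t := ht
    simp only
    congr 1
    simp only [ContinuousMap.mul_apply, ContinuousMap.pow_apply, ContinuousMap.star_apply]
    have hiota : iota (Zfun t) = Complex.exp (-(1 + Complex.I) * t) := by
      rw [iota, ContinuousMap.restrict_apply]
      exact Zfun_eq t ht'
    rw [hiota, Complex.star_def, ← Complex.exp_conj]
    have hconj : (starRingEnd ℂ) (-(1 + Complex.I) * (t:ℂ)) = -(1 - Complex.I) * t := by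
      rw [map_mul, map_neg, map_add, Complex.conj_I, Complex.conj_ofReal, map_one]
      ring
    rw [hconj, ← Complex.exp_nat_mul, ← Complex.exp_nat_mul, ← Complex.exp_add]
    congr 1
    rw [mu]
    push_cast
    ring
  rw [setIntegral_congr_fun measurableSet_Ioi hval]
  exact hcc (m, n)

lemma span_mul : ∀ a ∈ Submodule.span ℂ monoSet, ∀ b ∈ Submodule.span ℂ monoSet,
    a * b ∈ Submodule.span ℂ monoSet := by
  have hmm : ∀ h1 ∈ monoSet, ∀ h2 ∈ monoSet, h1 * h2 ∈ monoSet := by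
    rintro h1 ⟨m1, n1, rfl⟩ h2 ⟨m2, n2, rfl⟩
    exact ⟨m1 + m2, n1 + n2, by rw [pow_add, pow_add]; ring⟩
  have hSm : ∀ h ∈ monoSet, ∀ a ∈ Submodule.span ℂ monoSet,
      a * h ∈ Submodule.span ℂ monoSet := by
    intro h hh a ha
    induction ha using Submodule.span_induction with
    | mem x hx => exact Submodule.subset_span (hmm x hx h hh)
    | zero => rw [zero_mul]; exact Submodule.zero_mem _
    | add x y hx hy ihx ihy => rw [add_mul]; exact Submodule.add_mem _ ihx ihy
    | smul a x hx ihx => rw [smul_mul_assoc]; exact Submodule.smul_mem _ _ ihx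
  intro a ha b hb
  induction hb using Submodule.span_induction with
  | mem x hx => exact hSm x hx a ha
  | zero => rw [mul_zero]; exact Submodule.zero_mem _
  | add x y hx hy ihx ihy => rw [mul_add]; exact Submodule.add_mem _ ihx ihy
  | smul c x hx ihx => rw [mul_smul_comm]; exact Submodule.smul_mem _ _ ihx

lemma span_star : ∀ a ∈ Submodule.span ℂ monoSet, star a ∈ Submodule.span ℂ monoSet := by
  intro a ha
  induction ha using Submodule.span_induction with
  | mem x hx =>
      obtain ⟨m, n, rfl⟩ := hx
      apply Submodule.subset_span
      exact ⟨n, m, by rw [star_mul', star_pow, star_pow, star_star]; ring⟩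
  | zero => rw [star_zero]; exact Submodule.zero_mem _
  | add x y hx hy ihx ihy => rw [star_add]; exact Submodule.add_mem _ ihx ihy
  | smul c x hx ihx => rw [star_smul]; exact Submodule.smul_mem _ _ ihx

lemma ev_span (hg : Integrable g) (hcc : ∀ p : ℕ × ℕ, cc g p = 0) :
    ∀ f ∈ Submodule.span ℂ monoSet, ev g f = 0 := by
  intro f hf
  induction hf using Submodule.span_induction with
  | mem x hx => obtain ⟨m, n, rfl⟩ := hx; exact ev_mono hcc m n
  | zero =>
      rw [ev]
      have : (fun t => (0 : C(KK,ℂ)) (Zfun t) * g t) = fun _ => (0:ℂ) := by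
        funext t; simp
      rw [this, integral_zero]
  | add x y hx hy ihx ihy => rw [ev_add hg, ihx, ihy, add_zero]
  | smul c x hx ihx => rw [ev_smul hg, ihx, mul_zero]

lemma ev_all (hg : Integrable g) (hcc : ∀ p : ℕ × ℕ, cc g p = 0) (f : C(KK, ℂ)) :
    ev g f = 0 := by
  set B₀ := ∫ t in Set.Ioi (0:ℝ), ‖g t‖ with hB₀
  have hB₀0 : 0 ≤ B₀ := setIntegral_nonneg measurableSet_Ioi fun t _ => norm_nonneg _
  have hcl : f ∈ closure ((Submodule.span ℂ monoSet : Submodule ℂ C(KK,ℂ)) : Set C(KK,ℂ)) := by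
    have hsub : (((polynomialFunctions KK).starClosure : StarSubalgebra ℂ C(KK,ℂ)) : Set C(KK,ℂ)) ⊆
        ((Submodule.span ℂ monoSet : Submodule ℂ C(KK,ℂ)) : Set C(KK,ℂ)) := by
      intro a ha
      rw [SetLike.mem_coe, polynomialFunctions.starClosure_eq_adjoin_X] at ha
      rw [SetLike.mem_coe]
      induction ha using StarAlgebra.adjoin_induction with
      | mem x hx =>
          apply Submodule.subset_span
          rw [Set.mem_singleton_iff] at hx
          subst hx
          refine ⟨1, 0, ?_⟩
          rw [pow_one, pow_zero, mul_one]
          rw [Polynomial.toContinuousMapOnAlgHom_apply,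
            Polynomial.toContinuousMapOn_X_eq_restrict_id]
          rfl
      | algebraMap r =>
          rw [Algebra.algebraMap_eq_smul_one]
          refine Submodule.smul_mem _ _ (Submodule.subset_span ⟨0, 0, by simp⟩)
      | add x y hx hy ihx ihy => exact Submodule.add_mem _ ihx ihy
      | mul x y hx hy ihx ihy => exact span_mul x ihx y ihy
      | star x hx ihx => exact span_star x ihx
    have htop := polynomialFunctions.starClosure_topologicalClosure KK
    have hf : f ∈ (polynomialFunctions KK).starClosure.topologicalClosure := by
      rw [htop]; trivial
    rw [← SetLike.mem_coe, StarSubalgebra.topologicalClosure_coe] at hf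
    exact closure_mono hsub hf
  apply norm_le_zero_iff.1
  apply le_of_forall_pos_le_add
  intro ε hε
  rw [zero_add]
  have hδ : 0 < ε / (B₀ + 1) := by positivity
  obtain ⟨f', hf'S, hf'd⟩ := Metric.mem_closure_iff.1 hcl _ hδ
  have hev' : ev g f' = 0 := ev_span hg hcc f' hf'S
  have heq : ev g f = ev g (f - f') := by rw [ev_sub hg, hev', sub_zero]
  rw [heq]
  calc ‖ev g (f - f')‖ ≤ ‖f - f'‖ * B₀ := ev_bound hg _
    _ ≤ (ε / (B₀ + 1)) * B₀ := by
        apply mul_le_mul_of_nonneg_right _ hB₀0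
        rw [← dist_eq_norm]
        exact le_of_lt hf'd
    _ ≤ ε := by
        rw [div_mul_eq_mul_div]
        rw [div_le_iff₀ (by positivity)]
        nlinarith


lemma final {g : ℝ → ℂ} (hg : Integrable g) (hsupp : ∀ t < (0 : ℝ), g t = 0)
    (hcc : ∀ p : ℕ × ℕ, cc g p = 0) : g =ᵐ[volume] 0 := by
  have hres := ae_eq_zero_of_integral_contDiff_smul_eq_zero (μ := volume)
    (hg.locallyIntegrable) ?_
  · exact hres
  intro ψ hψ hψc
  -- reduce to Ioi 0
  have h1 : (∫ x, ψ x • g x) = ∫ x in Set.Ici (0:ℝ), ψ x • g x := by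
    rw [setIntegral_eq_integral_of_forall_compl_eq_zero]
    intro x hx
    have hx' : x < 0 := by simpa using hx
    rw [hsupp x hx', smul_zero]
  rw [h1, integral_Ici_eq_integral_Ioi]
  -- compact support radius
  obtain ⟨T, hT0, hTz⟩ : ∃ T : ℝ, 0 < T ∧ ∀ u : ℝ, T ≤ |u| → ψ u = 0 := by
    obtain ⟨r, hr⟩ := hψc.isBounded.subset_closedBall 0
    refine ⟨max r 1 + 1, by positivity, fun u hu => ?_⟩
    apply image_eq_zero_of_notMem_tsupport
    intro hmem
    have h2 := hr hmem
    rw [Metric.mem_closedBall, Real.dist_eq, sub_zero] at h2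
    have : r ≤ max r 1 := le_max_left _ _
    linarith
  -- the continuous extension to the disk
  set qf : ℂ → ℂ := fun z => if z = 0 then 0 else (ψ (-Real.log (‖z‖)) : ℂ) with hqf
  have hq0 : ∀ z : ℂ, ‖z‖ < Real.exp (-T) → qf z = 0 := by
    intro z hz
    rcases eq_or_ne z 0 with rfl | hzne
    · rw [hqf]; simp
    · rw [hqf]
      simp only [if_neg hzne]
      have habs0 : 0 < ‖z‖ := norm_pos_iff.2 hzne
      have hlog : Real.log (‖z‖) < -T := by
        rw [← Real.log_exp (-T)]
        exact Real.log_lt_log habs0 hz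
      rw [hTz (-Real.log (‖z‖)) (by rw [abs_of_pos (by linarith)]; linarith)]
      norm_num
  have hqcont : Continuous qf := by
    rw [continuous_iff_continuousAt]
    intro z
    rcases eq_or_ne z 0 with rfl | hz
    · have heq : qf =ᶠ[nhds (0:ℂ)] (fun _ => (0:ℂ)) := by
        filter_upwards [Metric.ball_mem_nhds (0:ℂ) (Real.exp_pos (-T))] with w hw
        apply hq0
        rw [Metric.mem_ball, Complex.dist_eq, sub_zero] at hw
        exact hw
      exact heq.continuousAt
    · have hcont2 : ContinuousAt (fun w : ℂ => (ψ (-Real.log (‖w‖)) : ℂ)) z := by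
        apply Complex.continuous_ofReal.continuousAt.comp
        apply (hψ.continuous).continuousAt.comp
        apply ContinuousAt.neg
        exact (Real.continuousAt_log (norm_ne_zero_iff.2 hz)).comp
          continuous_norm.continuousAt
      apply hcont2.congr
      filter_upwards [isOpen_compl_singleton.mem_nhds hz] with w hw
      rw [hqf]
      exact (if_neg hw).symm
  set φ : C(KK, ℂ) := ⟨fun z => qf z, hqcont.comp continuous_subtype_val⟩ with hφ
  have hev := ev_all hg hcc φ
  rw [ev] at hev
  rw [← hev]
  apply setIntegral_congr_fun measurableSet_Ioi
  intro t ht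
  have ht' : (0:ℝ) < t := ht
  have hzne : Complex.exp (-(1 + Complex.I) * (t:ℂ)) ≠ 0 := Complex.exp_ne_zero _
  have habs : ‖Complex.exp (-(1 + Complex.I) * (t:ℂ))‖ = Real.exp (-t) := by
    rw [Complex.norm_exp]
    congr 1
    simp [Complex.mul_re]
  have hφval : φ (Zfun t) = ((ψ t : ℝ) : ℂ) := by
    rw [hφ]
    show qf (Zfun t : ℂ) = _
    rw [Zfun_eq t ht', hqf]
    simp only [if_neg hzne]
    rw [habs, Real.log_exp]
    norm_num
  show ψ t • g t = φ (Zfun t) * g t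
  rw [hφval, Complex.real_smul]

end SpiralHUP

open MeasureTheory Real

/-- Heisenberg uniqueness for the spiral against the anti-spiral: if `g ∈ L¹[0,∞)` and
`∫₀^∞ e^{-iπ e^{s-t} cos(t-s)} g(t) dt = 0` for all `s ∈ ℝ`, then `g = 0` a.e. -/
theorem spiral_antispiral_HUP (g : ℝ → ℂ) (hg : Integrable g)
    (hsupp : ∀ t < (0 : ℝ), g t = 0)
    (hvanish : ∀ s : ℝ,
      ∫ t in Set.Ioi (0 : ℝ),
        Complex.exp (-(Complex.I * (Real.pi : ℂ) * (Real.exp (s - t) : ℂ) * (Real.cos (t - s) : ℂ)))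
          * g t = 0) :
    g =ᵐ[volume] 0 := by
  apply SpiralHUP.final hg hsupp
  have hE1 := fun s => SpiralHUP.E1 hg hvanish s
  have hbb := SpiralHUP.bb_zero hg hE1
  intro p
  have hp := hbb p
  rw [SpiralHUP.bb] at hp
  exact (mul_eq_zero.1 hp).resolve_left (SpiralHUP.dd_ne_zero p)
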